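/- For all real numbers ρ, ρ̂, w, ŵ with ρ̂ > 0, the friction-term integrand satisfies the pointwise lower bound (|w|w − |ŵ|ŵ)(ρw − ρ̂ŵ) ≥ (ρ̂ (|w| + |ŵ|)/8) (w − ŵ)² − (|w| + |ŵ|) (|w|²/ρ̂) (ρ − ρ̂)². -/

import Mathlib

set_option maxHeartbeats 1000000


/-- pointwise lower bound for the friction-term integrand
`(|w|w − |ŵ|ŵ)(ρw − ρ̂ŵ)`. -/
theorem friction_integrand_pointwise_lower_bound
    (ρ ρh w wh : ℝ) (hρh : 0 < ρh) :
    ρh * (|w| + |wh|) / 8 * (w - wh) ^ 2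
        - (|w| + |wh|) * (|w| ^ 2 / ρh) * (ρ - ρh) ^ 2
      ≤ (|w| * w - |wh| * wh) * (ρ * w - ρh * wh) := by
  set S := |w| + |wh| with hSdef
  set A := |w| * w - |wh| * wh with hAdef
  clear_value S A
  have hS : 0 ≤ S := by rw [hSdef]; positivity
  -- monotonicity: A * (w - wh) ≥ (S/2) (w-wh)^2
  have h1 : S / 2 * (w - wh) ^ 2 ≤ A * (w - wh) := by
    rcases abs_cases w with ⟨hw, _⟩ | ⟨hw, _⟩ <;>
      rcases abs_cases wh with ⟨hwh, _⟩ | ⟨hwh, _⟩ <;>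
      simp only [hSdef, hAdef, hw, hwh] <;>
      nlinarith [sq_nonneg (w - wh), sq_nonneg (w + wh), sq_nonneg w, sq_nonneg wh]
  -- Lipschitz: |A| ≤ S * |w - wh|
  have h2 : |A| ≤ S * |w - wh| := by
    rw [abs_le]
    have hd1 : w - wh ≤ |w - wh| := le_abs_self _
    have hd2 : -|w - wh| ≤ w - wh := neg_abs_le _
    have hd3 : (0:ℝ) ≤ |w - wh| := abs_nonneg _
    constructor <;>
    · rcases abs_cases w with ⟨hw, hw2⟩ | ⟨hw, hw2⟩ <;>
        rcases abs_cases wh with ⟨hwh, hwh2⟩ | ⟨hwh, hwh2⟩ <;>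
        simp only [hSdef, hAdef, hw, hwh] <;>
        nlinarith [mul_nonneg hd3 hd3, sq_abs (w - wh)]
  -- cross term bounded below
  have h3 : -(S * |w - wh| * (|w| * |ρ - ρh|)) ≤ A * w * (ρ - ρh) := by
    have := neg_abs_le (A * w * (ρ - ρh))
    have habs : |A * w * (ρ - ρh)| = |A| * (|w| * |ρ - ρh|) := by
      rw [abs_mul, abs_mul]; ring
    have h2' : |A| * (|w| * |ρ - ρh|) ≤ S * |w - wh| * (|w| * |ρ - ρh|) := by
      apply mul_le_mul_of_nonneg_right h2; positivity
    nlinarith [this, habs, h2']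
  -- Young's inequality (multiplied through by rho-hat, no division)
  have h4m : ρh * (|w - wh| * (|w| * |ρ - ρh|))
      ≤ 3 * ρh ^ 2 / 8 * (w - wh) ^ 2 + w ^ 2 * (ρ - ρh) ^ 2 := by
    have e1 : |w - wh| ^ 2 = (w - wh) ^ 2 := sq_abs _
    have e2 : (|w| * |ρ - ρh|) ^ 2 = w ^ 2 * (ρ - ρh) ^ 2 := by
      rw [mul_pow, sq_abs, sq_abs]
    nlinarith [sq_nonneg (3 * ρh / 4 * |w - wh| - |w| * |ρ - ρh|),
      sq_nonneg (|w| * |ρ - ρh|), e1, e2]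
  have h4' : S * (ρh * (|w - wh| * (|w| * |ρ - ρh|)))
      ≤ S * (3 * ρh ^ 2 / 8 * (w - wh) ^ 2 + w ^ 2 * (ρ - ρh) ^ 2) :=
    mul_le_mul_of_nonneg_left h4m hS
  -- reduce goal to the form multiplied by rho-hat
  rw [← mul_le_mul_iff_right₀ hρh]
  have e : ρh * (ρh * S / 8 * (w - wh) ^ 2 - S * (|w| ^ 2 / ρh) * (ρ - ρh) ^ 2)
      = ρh ^ 2 * (S / 2 * (w - wh) ^ 2) - 3 * ρh ^ 2 / 8 * (S * (w - wh) ^ 2)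
        - S * (w ^ 2 * (ρ - ρh) ^ 2) := by
    rw [sq_abs]; field_simp; ring
  have hid : ρh * (A * (ρ * w - ρh * wh))
      = ρh ^ 2 * (A * (w - wh)) + ρh * (A * w * (ρ - ρh)) := by ring
  have hmono : ρh ^ 2 * (S / 2 * (w - wh) ^ 2) ≤ ρh ^ 2 * (A * (w - wh)) :=
    mul_le_mul_of_nonneg_left h1 (by positivity)
  have hcross : ρh * (-(S * |w - wh| * (|w| * |ρ - ρh|))) ≤ ρh * (A * w * (ρ - ρh)) :=
    mul_le_mul_of_nonneg_left h3 hρh.le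
  have e3 : ρh * (-(S * |w - wh| * (|w| * |ρ - ρh|)))
      = -(S * (ρh * (|w - wh| * (|w| * |ρ - ρh|)))) := by ring
  have e4 : S * (3 * ρh ^ 2 / 8 * (w - wh) ^ 2 + w ^ 2 * (ρ - ρh) ^ 2)
      = 3 * ρh ^ 2 / 8 * (S * (w - wh) ^ 2) + S * (w ^ 2 * (ρ - ρh) ^ 2) := by ring
  rw [e, hid]
  rw [e3] at hcross
  rw [e4] at h4'
  nlinarith [hmono, hcross, h4']
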